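/- Define r(t) := √((N+1)t) for t > 0, and define f : ℝ^N × (0,∞) → ℝ and ζ : ℝ^N × (0,∞) → ℝ^N by f(x,t) := r(t) + t(N−1)/r(t) if φ°(x) ≤ r(t) and f(x,t) := φ°(x) + t(N−1)/φ°(x) otherwise, and ζ(x,t) := x/r(t) if φ°(x) ≤ r(t) and ζ(x,t) := x/φ°(x) otherwise. Then: (1) f(x,t) → φ°(x) as t ↓ 0 for every x ∈ ℝ^N; (2) for almost every (x,t) ∈ ℝ^N × (0,∞), f is differentiable at (x,t), the map ζ(·,t) is differentiable at x, the equation ∂_t f(x,t) = div_x ζ(x,t) holds (where div_x ζ is the trace of the spatial derivative of ζ(·,t)), and ζ(x,t) ∈ ∂φ(∇_x f(x,t)). In other words, (f,ζ) solves the anisotropic total variation flow ∂_t f = div ζ, ζ ∈ ∂φ(∇f), with initial datum φ°. -/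

import Mathlib

open MeasureTheory Set Filter Topology
open scoped RealInnerProductSpace ENNReal

noncomputable section

/-- An anisotropy (norm) on `ℝ^N`: convex, even, positively 1-homogeneous and
positive away from the origin. -/
structure IsAnisoNorm {N : ℕ} (φ : EuclideanSpace ℝ (Fin N) → ℝ) : Prop where
  convexOn : ConvexOn ℝ Set.univ φ
  even : ∀ x, φ (-x) = φ x
  homog : ∀ (c : ℝ) (x : EuclideanSpace ℝ (Fin N)), 0 ≤ c → φ (c • x) = c * φ x
  pos : ∀ x : EuclideanSpace ℝ (Fin N), x ≠ 0 → 0 < φ x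

/-- The polar norm `φ°(ξ) = sup {ξ·η : φ(η) ≤ 1}`. -/
noncomputable def polar {N : ℕ} (φ : EuclideanSpace ℝ (Fin N) → ℝ)
    (ξ : EuclideanSpace ℝ (Fin N)) : ℝ :=
  sSup ((fun η => ⟪ξ, η⟫) '' {η : EuclideanSpace ℝ (Fin N) | φ η ≤ 1})

/-- The subdifferential `∂φ(p) = {v : ∀ q, φ(q) ≥ φ(p) + v·(q-p)}`. -/
def subdiff {N : ℕ} (φ : EuclideanSpace ℝ (Fin N) → ℝ) (p : EuclideanSpace ℝ (Fin N)) :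
    Set (EuclideanSpace ℝ (Fin N)) :=
  {v | ∀ q, φ p + ⟪v, q - p⟫ ≤ φ q}


/-- The explicit solution `f` of the anisotropic total variation flow with initial
datum `φ°`, with `r(t) = √((N+1)t)`. -/
noncomputable def fTV {N : ℕ} (φ : EuclideanSpace ℝ (Fin N) → ℝ)
    (x : EuclideanSpace ℝ (Fin N)) (t : ℝ) : ℝ :=
  if polar φ x ≤ Real.sqrt (((N : ℝ) + 1) * t) then
    Real.sqrt (((N : ℝ) + 1) * t) + t * ((N : ℝ) - 1) / Real.sqrt (((N : ℝ) + 1) * t)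
  else
    polar φ x + t * ((N : ℝ) - 1) / polar φ x

/-- The associated vector field `ζ`. -/
noncomputable def zetaTV {N : ℕ} (φ : EuclideanSpace ℝ (Fin N) → ℝ)
    (x : EuclideanSpace ℝ (Fin N)) (t : ℝ) : EuclideanSpace ℝ (Fin N) :=
  if polar φ x ≤ Real.sqrt (((N : ℝ) + 1) * t) then
    (Real.sqrt (((N : ℝ) + 1) * t))⁻¹ • x
  else
    (polar φ x)⁻¹ • x

open scoped NNReal

namespace AnisoAux

variable {N : ℕ} {φ : EuclideanSpace ℝ (Fin N) → ℝ}

local notation "E" => EuclideanSpace ℝ (Fin N)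

lemma phi_zero (hφ : IsAnisoNorm φ) : φ 0 = 0 := by
  have := hφ.homog 0 0 le_rfl; simpa using this

lemma phi_nonneg (hφ : IsAnisoNorm φ) (x : E) : 0 ≤ φ x := by
  have h := hφ.convexOn.2 (mem_univ x) (mem_univ (-x)) (by norm_num : (0:ℝ) ≤ 1/2)
    (by norm_num : (0:ℝ) ≤ 1/2) (by norm_num)
  have hx : (1/2 : ℝ) • x + (1/2 : ℝ) • (-x) = 0 := by
    simp [smul_neg]
  rw [hx, phi_zero hφ, hφ.even] at h
  simp only [smul_eq_mul] at h
  linarith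

lemma phi_subadd (hφ : IsAnisoNorm φ) (a b : E) : φ (a + b) ≤ φ a + φ b := by
  have h := hφ.convexOn.2 (mem_univ a) (mem_univ b) (by norm_num : (0:ℝ) ≤ 1/2)
    (by norm_num : (0:ℝ) ≤ 1/2) (by norm_num)
  have h2 : φ ((1/2 : ℝ) • (a + b)) = (1/2) * φ (a + b) := hφ.homog _ _ (by norm_num)
  rw [smul_add] at h2
  rw [h2] at h
  simp only [smul_eq_mul] at h
  linarith

lemma phi_abs_homog (hφ : IsAnisoNorm φ) (c : ℝ) (x : E) : φ (c • x) = |c| * φ x := by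
  rcases le_or_gt 0 c with h | h
  · rw [hφ.homog c x h, abs_of_nonneg h]
  · have : c • x = -((-c) • x) := by simp
    rw [this, hφ.even, hφ.homog (-c) x (by linarith), abs_of_neg h]

lemma phi_sum_le (hφ : IsAnisoNorm φ) {ι : Type*} (s : Finset ι) (g : ι → E) :
    φ (∑ i ∈ s, g i) ≤ ∑ i ∈ s, φ (g i) := by
  classical
  induction s using Finset.induction_on with
  | empty => simp [phi_zero hφ]
  | insert _ _ hi ih =>
      rename_i a s'
      rw [Finset.sum_insert hi, Finset.sum_insert hi]
      exact le_trans (phi_subadd hφ _ _) (by linarith)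

lemma abs_coord_le_norm (x : E) (i : Fin N) : |x i| ≤ ‖x‖ := by
  have h1 : ⟪EuclideanSpace.single i (1:ℝ), x⟫ = x i := by
    simp [EuclideanSpace.inner_single_left]
  have h2 := abs_real_inner_le_norm (EuclideanSpace.single i (1:ℝ)) x
  rw [h1, EuclideanSpace.norm_single] at h2
  simpa using h2

lemma phi_le_norm (hφ : IsAnisoNorm φ) :
    ∃ C : ℝ, 0 ≤ C ∧ ∀ x : E, φ x ≤ C * ‖x‖ := by
  refine ⟨∑ i : Fin N, φ (EuclideanSpace.single i 1), Finset.sum_nonneg fun i _ => phi_nonneg hφ _, fun x => ?_⟩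
  have hx : x = ∑ i : Fin N, (x i) • EuclideanSpace.single i (1:ℝ) := by
    ext j
    simp [EuclideanSpace.single_apply, Pi.single_apply]
  calc φ x = φ (∑ i : Fin N, (x i) • EuclideanSpace.single i (1:ℝ)) := by rw [← hx]
    _ ≤ ∑ i : Fin N, φ ((x i) • EuclideanSpace.single i (1:ℝ)) := phi_sum_le hφ _ _
    _ ≤ ∑ i : Fin N, ‖x‖ * φ (EuclideanSpace.single i (1:ℝ)) := by
        refine Finset.sum_le_sum fun i _ => ?_
        rw [phi_abs_homog hφ]
        exact mul_le_mul_of_nonneg_right (abs_coord_le_norm x i) (phi_nonneg hφ _)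
    _ = (∑ i : Fin N, φ (EuclideanSpace.single i 1)) * ‖x‖ := by
        rw [Finset.sum_mul]
        exact Finset.sum_congr rfl fun i _ => mul_comm _ _

lemma phi_continuous (hφ : IsAnisoNorm φ) : Continuous φ := by
  obtain ⟨C, hC0, hC⟩ := phi_le_norm hφ
  rw [Metric.continuous_iff]
  intro x ε hε
  rcases eq_or_lt_of_le hC0 with h0 | h0
  · refine ⟨1, one_pos, fun y _ => ?_⟩
    have h1 : φ y ≤ 0 := le_trans (hC y) (by rw [← h0]; simp)
    have h2 : φ x ≤ 0 := le_trans (hC x) (by rw [← h0]; simp)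
    have h1' := phi_nonneg hφ y
    have h2' := phi_nonneg hφ x
    simp [Real.dist_eq, le_antisymm h1 h1', le_antisymm h2 h2', hε]
  · refine ⟨ε / C, by positivity, fun y hy => ?_⟩
    have key : ∀ a b : E, φ a - φ b ≤ C * ‖a - b‖ := by
      intro a b
      have := phi_subadd hφ (a - b) b
      simp only [sub_add_cancel] at this
      linarith [hC (a - b)]
    have h1 := key y x
    have h2 := key x y
    rw [show x - y = -(y-x) by abel] at h2
    rw [Real.dist_eq, abs_lt]
    rw [dist_eq_norm] at hy
    have hn : ‖y - x‖ < ε / C := hy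
    have hn2 : ‖-(y - x)‖ < ε / C := by rwa [norm_neg]
    have e1 : C * ‖y - x‖ < ε := by
      have := mul_lt_mul_of_pos_left hn h0
      rwa [mul_div_cancel₀ _ h0.ne'] at this
    have e2 : C * ‖-(y - x)‖ < ε := by
      have := mul_lt_mul_of_pos_left hn2 h0
      rwa [mul_div_cancel₀ _ h0.ne'] at this
    constructor <;> linarith

lemma phi_lower (hφ : IsAnisoNorm φ) (hN : 0 < N) :
    ∃ m : ℝ, 0 < m ∧ ∀ x : E, m * ‖x‖ ≤ φ x := by
  haveI : Nonempty (Fin N) := ⟨⟨0, hN⟩⟩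
  have hsph : (Metric.sphere (0:E) 1).Nonempty := by
    rw [NormedSpace.sphere_nonempty]; norm_num
  obtain ⟨x₀, hx₀s, hmin⟩ := (isCompact_sphere (0:E) 1).exists_isMinOn hsph
    ((phi_continuous hφ).continuousOn)
  have hx₀ : ‖x₀‖ = 1 := by simpa using hx₀s
  have hx₀ne : x₀ ≠ 0 := by intro h; rw [h] at hx₀; simp at hx₀
  refine ⟨φ x₀, hφ.pos x₀ hx₀ne, fun x => ?_⟩
  rcases eq_or_ne x 0 with rfl | hx
  · simp [phi_zero hφ]
  · have hxn : (0:ℝ) < ‖x‖ := norm_pos_iff.mpr hx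
    have hu : (‖x‖⁻¹ • x) ∈ Metric.sphere (0:E) 1 := by
      simp [norm_smul, abs_of_pos (inv_pos.mpr hxn), inv_mul_cancel₀ hxn.ne']
    have h1 : φ x₀ ≤ φ (‖x‖⁻¹ • x) := hmin hu
    have h2 : φ (‖x‖⁻¹ • x) = ‖x‖⁻¹ * φ x := hφ.homog _ _ (by positivity)
    rw [h2] at h1
    have := mul_le_mul_of_nonneg_left h1 hxn.le
    rw [← mul_assoc, mul_inv_cancel₀ hxn.ne', one_mul] at this
    linarith [this]

section Polar

variable (hφ : IsAnisoNorm φ) (hN : 0 < N)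

lemma K_nonempty (hφ : IsAnisoNorm φ) : Set.Nonempty {η : E | φ η ≤ 1} :=
  ⟨0, by simp [phi_zero hφ]⟩

lemma K_bounded (hφ : IsAnisoNorm φ) (hN : 0 < N) :
    ∃ R : ℝ, 0 < R ∧ ∀ η : E, φ η ≤ 1 → ‖η‖ ≤ R := by
  obtain ⟨m, hm, hml⟩ := phi_lower hφ hN
  refine ⟨m⁻¹, inv_pos.mpr hm, fun η hη => ?_⟩
  have h1 : m * ‖η‖ ≤ 1 := le_trans (hml η) hη
  rw [inv_eq_one_div, le_div_iff₀ hm]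
  linarith [mul_comm m ‖η‖]

lemma polar_bddAbove (hφ : IsAnisoNorm φ) (hN : 0 < N) (ξ : E) :
    BddAbove ((fun η => ⟪ξ, η⟫) '' {η : E | φ η ≤ 1}) := by
  obtain ⟨R, hR, hRb⟩ := K_bounded hφ hN
  refine ⟨‖ξ‖ * R, ?_⟩
  rintro y ⟨η, hη, rfl⟩
  calc ⟪ξ, η⟫ ≤ ‖ξ‖ * ‖η‖ := real_inner_le_norm ξ η
    _ ≤ ‖ξ‖ * R := mul_le_mul_of_nonneg_left (hRb η hη) (norm_nonneg ξ)

lemma inner_le_polar (hφ : IsAnisoNorm φ) (hN : 0 < N) {η : E} (hη : φ η ≤ 1) (ξ : E) :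
    ⟪ξ, η⟫ ≤ polar φ ξ :=
  le_csSup (polar_bddAbove hφ hN ξ) ⟨η, hη, rfl⟩

lemma polar_le (hφ : IsAnisoNorm φ) {ξ : E} {M : ℝ}
    (h : ∀ η : E, φ η ≤ 1 → ⟪ξ, η⟫ ≤ M) : polar φ ξ ≤ M := by
  apply csSup_le
  · exact (K_nonempty hφ).image _
  · rintro y ⟨η, hη, rfl⟩; exact h η hη

lemma polar_nonneg (hφ : IsAnisoNorm φ) (hN : 0 < N) (ξ : E) : 0 ≤ polar φ ξ := by
  have := inner_le_polar hφ hN (by simp [phi_zero hφ] : φ (0:E) ≤ 1) ξ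
  simpa using this

lemma polar_le_norm (hφ : IsAnisoNorm φ) (hN : 0 < N) :
    ∃ R : ℝ, 0 < R ∧ ∀ ξ : E, polar φ ξ ≤ R * ‖ξ‖ := by
  obtain ⟨R, hR, hRb⟩ := K_bounded hφ hN
  refine ⟨R, hR, fun ξ => polar_le hφ fun η hη => ?_⟩
  calc ⟪ξ, η⟫ ≤ ‖ξ‖ * ‖η‖ := real_inner_le_norm ξ η
    _ ≤ ‖ξ‖ * R := mul_le_mul_of_nonneg_left (hRb η hη) (norm_nonneg ξ)
    _ = R * ‖ξ‖ := mul_comm _ _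

lemma inner_le_polar_mul_phi (hφ : IsAnisoNorm φ) (hN : 0 < N) (ξ q : E) :
    ⟪ξ, q⟫ ≤ polar φ ξ * φ q := by
  rcases eq_or_ne q 0 with rfl | hq
  · simp [phi_zero hφ]
  · have hq0 : 0 < φ q := hφ.pos q hq
    have hη : φ ((φ q)⁻¹ • q) ≤ 1 := by
      rw [hφ.homog _ _ (by positivity), inv_mul_cancel₀ hq0.ne']
    have := inner_le_polar hφ hN hη ξ
    rw [real_inner_smul_right] at this
    calc ⟪ξ, q⟫ = φ q * ((φ q)⁻¹ * ⟪ξ, q⟫) := by field_simp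
      _ ≤ φ q * polar φ ξ := mul_le_mul_of_nonneg_left this hq0.le
      _ = polar φ ξ * φ q := mul_comm _ _

lemma polar_homog (hφ : IsAnisoNorm φ) (hN : 0 < N) {c : ℝ} (hc : 0 ≤ c) (ξ : E) :
    polar φ (c • ξ) = c * polar φ ξ := by
  have hle : ∀ (d : ℝ), 0 ≤ d → ∀ ζ : E, polar φ (d • ζ) ≤ d * polar φ ζ := by
    intro d hd ζ
    apply polar_le hφ
    intro η hη
    rw [real_inner_smul_left]
    exact mul_le_mul_of_nonneg_left (inner_le_polar hφ hN hη ζ) hd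
  rcases eq_or_lt_of_le hc with rfl | hc'
  · simp only [zero_smul, zero_mul]
    exact le_antisymm (by simpa using hle 0 le_rfl ξ) (by simpa using polar_nonneg hφ hN (0:E))
  · refine le_antisymm (hle c hc ξ) ?_
    have := hle c⁻¹ (by positivity) (c • ξ)
    rw [inv_smul_smul₀ hc'.ne'] at this
    calc c * polar φ ξ ≤ c * (c⁻¹ * polar φ (c • ξ)) := mul_le_mul_of_nonneg_left this hc
      _ = polar φ (c • ξ) := by field_simp

lemma polar_subadd (hφ : IsAnisoNorm φ) (hN : 0 < N) (a b : E) :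
    polar φ (a + b) ≤ polar φ a + polar φ b := by
  apply polar_le hφ
  intro η hη
  rw [inner_add_left]
  exact add_le_add (inner_le_polar hφ hN hη a) (inner_le_polar hφ hN hη b)

lemma polar_convexOn (hφ : IsAnisoNorm φ) (hN : 0 < N) :
    ConvexOn ℝ Set.univ (polar φ) := by
  refine ⟨convex_univ, fun x _ y _ a b ha hb _ => ?_⟩
  calc polar φ (a • x + b • y) ≤ polar φ (a • x) + polar φ (b • y) := polar_subadd hφ hN _ _
    _ = a • polar φ x + b • polar φ y := by
        rw [polar_homog hφ hN ha, polar_homog hφ hN hb]; rfl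

lemma polar_lipschitz (hφ : IsAnisoNorm φ) (hN : 0 < N) :
    ∃ R : ℝ≥0, LipschitzWith R (polar φ) := by
  obtain ⟨R, hR, hRb⟩ := polar_le_norm hφ hN
  refine ⟨⟨R, hR.le⟩, LipschitzWith.of_dist_le_mul fun x y => ?_⟩
  have key : ∀ a b : E, polar φ a - polar φ b ≤ R * ‖a - b‖ := by
    intro a b
    have h1 := polar_subadd hφ hN (a - b) b
    rw [sub_add_cancel] at h1
    linarith [hRb (a - b)]
  rw [Real.dist_eq, abs_sub_le_iff, dist_eq_norm]
  constructor
  · exact key x y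
  · have := key y x
    rwa [show y - x = -(x - y) by abel, norm_neg] at this

lemma polar_continuous (hφ : IsAnisoNorm φ) (hN : 0 < N) : Continuous (polar φ) := by
  obtain ⟨R, h⟩ := polar_lipschitz hφ hN
  exact h.continuous

lemma polar_pos (hφ : IsAnisoNorm φ) (hN : 0 < N) {x : E} (hx : x ≠ 0) : 0 < polar φ x := by
  have hφx : 0 < φ x := hφ.pos x hx
  have hη : φ ((φ x)⁻¹ • x) ≤ 1 := by
    rw [hφ.homog _ _ (by positivity), inv_mul_cancel₀ hφx.ne']
  have h := inner_le_polar hφ hN hη x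
  rw [real_inner_smul_right, real_inner_self_eq_norm_sq] at h
  have : 0 < (φ x)⁻¹ * (‖x‖ * ‖x‖) := by
    have : (0:ℝ) < ‖x‖ := norm_pos_iff.mpr hx
    positivity
  linarith

lemma bipolar (hφ : IsAnisoNorm φ) (hN : 0 < N) {w : E}
    (h : ∀ h : E, ⟪w, h⟫ ≤ polar φ h) : φ w ≤ 1 := by
  by_contra hw
  push_neg at hw
  have hKc : Convex ℝ {η : E | φ η ≤ 1} := by
    have := hφ.convexOn.convex_le 1
    simpa using this
  have hKcl : IsClosed {η : E | φ η ≤ 1} :=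
    isClosed_le (phi_continuous hφ) continuous_const
  have hwK : w ∉ {η : E | φ η ≤ 1} := by simp [not_le.mpr hw]
  obtain ⟨f, u, hfu, huw⟩ := geometric_hahn_banach_closed_point hKc hKcl hwK
  set h₀ : E := (InnerProductSpace.toDual ℝ _).symm f with hh₀
  have hf : ∀ y : E, f y = ⟪h₀, y⟫ := by
    intro y
    rw [hh₀, InnerProductSpace.toDual_symm_apply]
  have hP : polar φ h₀ ≤ u := polar_le hφ fun η hη => by
    have h5 := (hfu η hη).le
    rw [hf η] at h5
    first
    | exact h5
    | exact le_trans (le_of_eq (real_inner_comm _ _)) h5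
  have h2 : ⟪w, h₀⟫ ≤ u := le_trans (h h₀) hP
  rw [real_inner_comm, ← hf] at h2
  linarith

lemma polar_grad_euler (hφ : IsAnisoNorm φ) (hN : 0 < N) {x : E} {L : E →L[ℝ] ℝ}
    (hL : HasFDerivAt (polar φ) L x) : L x = polar φ x := by
  -- differentiate s ↦ polar φ (s • x) at s = 1
  have h1 : HasDerivAt (fun s : ℝ => polar φ (s • x)) (L x) 1 := by
    have hc : HasDerivAt (fun s : ℝ => s • x) x 1 := by
      simpa using (hasDerivAt_id (1:ℝ)).smul_const x
    have hL' : HasFDerivAt (polar φ) L ((1:ℝ) • x) := by simpa using hL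
    have := hL'.comp_hasDerivAt (x := (1:ℝ)) (f := fun s : ℝ => s • x) hc
    exact this
  have h2 : (fun s : ℝ => polar φ (s • x)) =ᶠ[nhds (1:ℝ)] fun s => s * polar φ x := by
    filter_upwards [eventually_gt_nhds (by norm_num : (0:ℝ) < 1)] with s hs
    exact polar_homog hφ hN hs.le x
  have h3 : HasDerivAt (fun s : ℝ => s * polar φ x) (L x) 1 :=
    h1.congr_of_eventuallyEq h2.symm
  have h4 : HasDerivAt (fun s : ℝ => s * polar φ x) (polar φ x) 1 := by
    simpa using (hasDerivAt_id (1:ℝ)).mul_const (polar φ x)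
  exact h3.unique h4

lemma polar_grad_le (hφ : IsAnisoNorm φ) (hN : 0 < N) {x : E} {L : E →L[ℝ] ℝ}
    (hL : HasFDerivAt (polar φ) L x) (h : E) : L h ≤ polar φ h := by
  set ψ : ℝ → ℝ := fun s => polar φ (x + s • h) with hψ
  have hψc : ConvexOn ℝ Set.univ ψ := by
    have haff : ConvexOn ℝ ((AffineMap.lineMap x (x + h) : ℝ →ᵃ[ℝ] E) ⁻¹' Set.univ)
        (polar φ ∘ (AffineMap.lineMap x (x + h) : ℝ →ᵃ[ℝ] E)) :=
      (polar_convexOn hφ hN).comp_affineMap _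
    have : ∀ s : ℝ, (AffineMap.lineMap x (x + h) : ℝ →ᵃ[ℝ] E) s = x + s • h := by
      intro s
      rw [AffineMap.lineMap_apply]
      simp
      abel
    refine ⟨convex_univ, fun a _ b _ ca cb hca hcb hab => ?_⟩
    have h6 := haff.2 (by simp : a ∈ _) (by simp : b ∈ _) hca hcb hab
    simp only [Function.comp_apply, this] at h6
    simp only [hψ, smul_eq_mul]
    convert h6 using 4 <;> simp
  have hd : HasDerivAt ψ (L h) 0 := by
    have hc : HasDerivAt (fun s : ℝ => x + s • h) h 0 := by
      simpa using ((hasDerivAt_id (0:ℝ)).smul_const h).const_add x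
    have hL' : HasFDerivAt (polar φ) L (x + (0:ℝ) • h) := by simpa using hL
    have := hL'.comp_hasDerivAt (x := (0:ℝ)) (f := fun s : ℝ => x + s • h) hc
    exact this
  have hs := hψc.le_slope_of_hasDerivAt (mem_univ 0) (mem_univ 1) one_pos hd
  rw [slope_def_field] at hs
  have hψ1 : ψ 1 = polar φ (x + h) := by simp [hψ]
  have hψ0 : ψ 0 = polar φ x := by simp [hψ]
  have hsub : polar φ (x + h) ≤ polar φ x + polar φ h := by
    have := polar_subadd hφ hN x h
    linarith [this]
  rw [hψ1, hψ0] at hs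
  simp only [sub_zero, div_one] at hs
  linarith [hs]

end Polar

end AnisoAux

namespace AnisoAux

variable {N : ℕ} {φ : EuclideanSpace ℝ (Fin N) → ℝ}

local notation "E" => EuclideanSpace ℝ (Fin N)

lemma tendsto_fTV (hφ : IsAnisoNorm φ) (hN : 0 < N) (x : E) :
    Filter.Tendsto (fun t => fTV φ x t) (nhdsWithin 0 (Set.Ioi 0)) (nhds (polar φ x)) := by
  set c : ℝ := (N : ℝ) + 1 with hc
  have hc0 : 0 < c := by positivity
  clear_value c
  rcases eq_or_lt_of_le (polar_nonneg hφ hN x) with h0 | h0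
  · -- polar φ x = 0
    have heq : ∀ t ∈ Set.Ioi (0:ℝ),
        fTV φ x t = (Real.sqrt c + ((N:ℝ) - 1) / Real.sqrt c) * Real.sqrt t := by
      intro t ht
      have ht0 : (0:ℝ) < t := ht
      have hsq : Real.sqrt (c * t) = Real.sqrt c * Real.sqrt t := Real.sqrt_mul hc0.le t
      have hcond : polar φ x ≤ Real.sqrt (c * t) := by
        rw [← h0]; exact Real.sqrt_nonneg _
      rw [fTV, ← hc, if_pos hcond, hsq]
      have hst : Real.sqrt t > 0 := Real.sqrt_pos.mpr ht0
      have hsc : Real.sqrt c > 0 := Real.sqrt_pos.mpr hc0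
      have htt : t = Real.sqrt t * Real.sqrt t := (Real.mul_self_sqrt ht0.le).symm
      set s := Real.sqrt t with hs
      rw [htt]
      field_simp
    have hlim : Filter.Tendsto
        (fun t => (Real.sqrt c + ((N:ℝ) - 1) / Real.sqrt c) * Real.sqrt t)
        (nhdsWithin 0 (Set.Ioi 0)) (nhds (polar φ x)) := by
      rw [← h0]
      have : Filter.Tendsto (fun t : ℝ => Real.sqrt t) (nhdsWithin 0 (Set.Ioi 0)) (nhds 0) := by
        have := (Real.continuous_sqrt.tendsto 0).mono_left
          (nhdsWithin_le_nhds (s := Set.Ioi (0:ℝ)))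
        simpa using this
      simpa using this.const_mul (Real.sqrt c + ((N:ℝ) - 1) / Real.sqrt c)
    exact hlim.congr' (by
      filter_upwards [self_mem_nhdsWithin] with t ht
      exact (heq t ht).symm)
  · -- polar φ x > 0
    have hev : ∀ᶠ t in nhdsWithin 0 (Set.Ioi 0),
        fTV φ x t = polar φ x + t * ((N:ℝ) - 1) / polar φ x := by
      have hmem : Set.Ioo (0:ℝ) ((polar φ x)^2 / c) ∈ nhdsWithin 0 (Set.Ioi 0) :=
        Ioo_mem_nhdsGT_of_mem ⟨le_rfl, div_pos (pow_pos h0 2) hc0⟩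
      filter_upwards [hmem] with t ht
      have hlt : Real.sqrt (c * t) < polar φ x := by
        have h1 : c * t < (polar φ x)^2 := by
          have := ht.2
          rw [lt_div_iff₀ hc0] at this
          linarith [this]
        calc Real.sqrt (c * t) < Real.sqrt ((polar φ x)^2) :=
              Real.sqrt_lt_sqrt (mul_nonneg hc0.le ht.1.le) h1
          _ = polar φ x := Real.sqrt_sq h0.le
      rw [fTV, ← hc, if_neg (not_le.mpr hlt)]
    have hlim : Filter.Tendsto (fun t : ℝ => polar φ x + t * ((N:ℝ) - 1) / polar φ x)
        (nhdsWithin 0 (Set.Ioi 0)) (nhds (polar φ x)) := by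
      have hcont : Continuous (fun t : ℝ => polar φ x + t * ((N:ℝ) - 1) / polar φ x) := by
        continuity
      have := (hcont.tendsto 0).mono_left (nhdsWithin_le_nhds (s := Set.Ioi (0:ℝ)))
      simpa using this
    exact hlim.congr' (by filter_upwards [hev] with t ht; exact ht.symm)

end AnisoAux

namespace AnisoAux2

open AnisoAux

variable {N : ℕ} {φ : EuclideanSpace ℝ (Fin N) → ℝ}

local notation "E" => EuclideanSpace ℝ (Fin N)

lemma trace_smulRight' (l : E →L[ℝ] ℝ) (v : E) :
    LinearMap.trace ℝ (EuclideanSpace ℝ (Fin N)) ↑(l.smulRight v) = l v := by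
  classical
  set b := (EuclideanSpace.basisFun (Fin N) ℝ).toBasis with hb
  rw [LinearMap.trace_eq_matrix_trace ℝ b, Matrix.trace]
  have hdiag : ∀ i, Matrix.diag (LinearMap.toMatrix b b ↑(l.smulRight v)) i
      = l (b i) * v i := by
    intro i
    rw [Matrix.diag_apply, LinearMap.toMatrix_apply]
    have h1 : (↑(l.smulRight v) : E →ₗ[ℝ] E) (b i) = l (b i) • v := by
      simp
    rw [h1, _root_.map_smul]
    have h2 : b.repr v i = v i := by
      rw [hb, OrthonormalBasis.coe_toBasis_repr_apply, EuclideanSpace.basisFun_repr]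
    simp [h2]
  rw [Finset.sum_congr rfl (fun i _ => hdiag i)]
  have hlv : l v = ∑ i : Fin N, v i * l (b i) := by
    conv_lhs => rw [← b.sum_repr v]
    rw [map_sum]
    refine Finset.sum_congr rfl fun i _ => ?_
    have h2 : b.repr v i = v i := by
      rw [hb, OrthonormalBasis.coe_toBasis_repr_apply, EuclideanSpace.basisFun_repr]
    rw [_root_.map_smul, h2]
    rfl
  rw [hlv]
  exact Finset.sum_congr rfl fun i _ => mul_comm _ _

lemma trace_id' : LinearMap.trace ℝ (EuclideanSpace ℝ (Fin N))
    (LinearMap.id : EuclideanSpace ℝ (Fin N) →ₗ[ℝ] EuclideanSpace ℝ (Fin N)) = (N : ℝ) := by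
  rw [LinearMap.trace_id]
  simp [finrank_euclideanSpace_fin]

-- The full conclusion at a point p = (x, t)
def Claims (φ : EuclideanSpace ℝ (Fin N) → ℝ) (p : EuclideanSpace ℝ (Fin N) × ℝ) : Prop :=
  DifferentiableAt ℝ (fun q : EuclideanSpace ℝ (Fin N) × ℝ => fTV φ q.1 q.2) p ∧
  DifferentiableAt ℝ (fun y => zetaTV φ y p.2) p.1 ∧
  fderiv ℝ (fun q : EuclideanSpace ℝ (Fin N) × ℝ => fTV φ q.1 q.2) p (0, 1) =
    LinearMap.trace ℝ (EuclideanSpace ℝ (Fin N))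
      ↑(fderiv ℝ (fun y => zetaTV φ y p.2) p.1) ∧
  zetaTV φ p.1 p.2 ∈ subdiff φ (gradient (fun y => fTV φ y p.2) p.1)

lemma inner_case (hφ : IsAnisoNorm φ) (hN : 0 < N) {x : E} {t : ℝ} (ht : 0 < t)
    (hlt : polar φ x < Real.sqrt (((N : ℝ) + 1) * t)) : Claims φ (x, t) := by
  set c : ℝ := (N : ℝ) + 1 with hc
  have hc0 : 0 < c := by positivity
  have hs0 : 0 < Real.sqrt (c * t) := Real.sqrt_pos.mpr (by positivity)
  set s : ℝ := Real.sqrt (c * t) with hsdef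
  -- the model functions
  set H : ℝ → ℝ := fun τ => Real.sqrt (c * τ) + τ * ((N : ℝ) - 1) * (Real.sqrt (c * τ))⁻¹
    with hH
  -- open region
  have hUopen : IsOpen {q : E × ℝ | polar φ q.1 < Real.sqrt (c * q.2)} :=
    isOpen_lt ((polar_continuous hφ hN).comp continuous_fst)
      (Real.continuous_sqrt.comp (continuous_const.mul continuous_snd))
  have hUmem : {q : E × ℝ | polar φ q.1 < Real.sqrt (c * q.2)} ∈ nhds (x, t) :=
    hUopen.mem_nhds hlt
  have heq : (fun q : E × ℝ => fTV φ q.1 q.2) =ᶠ[nhds (x, t)] fun q => H q.2 := by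
    filter_upwards [hUmem] with q hq
    rw [fTV, ← hc, if_pos (le_of_lt hq), hH]
    simp only []
    rw [div_eq_mul_inv]
  -- derivative of H at t
  have hHderiv : HasDerivAt H ((N : ℝ) / s) t := by
    have h1 : HasDerivAt (fun τ : ℝ => c * τ) c t := by
      simpa using (hasDerivAt_id t).const_mul c
    have h2 : HasDerivAt (fun τ : ℝ => Real.sqrt (c * τ)) (c / (2 * s)) t := by
      have := h1.sqrt (by positivity : c * t ≠ 0)
      simpa [hsdef] using this
    have h3 : HasDerivAt (fun τ : ℝ => (Real.sqrt (c * τ))⁻¹) (-(s ^ 2)⁻¹ * (c / (2 * s))) t := by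
      have := (hasDerivAt_inv (by rw [hsdef] at hs0; exact hs0.ne')).comp t h2
      exact this
    have h4 : HasDerivAt (fun τ : ℝ => τ * ((N : ℝ) - 1)) ((N : ℝ) - 1) t := by
      simpa using (hasDerivAt_id t).mul_const ((N : ℝ) - 1)
    have h5 := h4.mul h3
    have h6 := h2.add h5
    rw [← hsdef] at h6
    have hss : s ^ 2 = c * t := by rw [hsdef]; exact Real.sq_sqrt (by positivity)
    clear_value s
    refine h6.congr_deriv ?_
    rw [hc] at hss ⊢
    have hs0' : s ≠ 0 := hs0.ne'
    field_simp
    first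
    | linear_combination ((N:ℝ)-1) * hss
    | linear_combination (-(2*((N:ℝ)-1)*s^3)) * hss

  -- joint function
  have hFjoint : HasFDerivAt (fun q : E × ℝ => H q.2)
      ((ContinuousLinearMap.smulRight (1 : ℝ →L[ℝ] ℝ) ((N : ℝ) / s)).comp
        (ContinuousLinearMap.snd ℝ E ℝ)) (x, t) :=
    by have := (hHderiv.hasFDerivAt).comp (x, t) (hasFDerivAt_snd (𝕜 := ℝ) (p := (x, t))); exact this
  have hdiff1 : DifferentiableAt ℝ (fun q : E × ℝ => fTV φ q.1 q.2) (x, t) := by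
    rw [Filter.EventuallyEq.differentiableAt_iff heq]
    exact hFjoint.differentiableAt
  have hfder : fderiv ℝ (fun q : E × ℝ => fTV φ q.1 q.2) (x, t) (0, 1) = (N : ℝ) / s := by
    rw [heq.fderiv_eq, hFjoint.fderiv]
    simp
  -- zeta near x
  have hVopen : IsOpen {y : E | polar φ y < s} :=
    isOpen_lt (polar_continuous hφ hN) continuous_const
  have hVmem : {y : E | polar φ y < s} ∈ nhds x := hVopen.mem_nhds hlt
  have hzeq : (fun y : E => zetaTV φ y t) =ᶠ[nhds x] fun y => s⁻¹ • y := by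
    filter_upwards [hVmem] with y hy
    rw [zetaTV, ← hc, ← hsdef, if_pos (le_of_lt hy)]
  have hzder : HasFDerivAt (fun y : E => s⁻¹ • y)
      (s⁻¹ • (ContinuousLinearMap.id ℝ E)) x := (hasFDerivAt_id x).const_smul s⁻¹
  have hdiff2 : DifferentiableAt ℝ (fun y : E => zetaTV φ y t) x := by
    rw [Filter.EventuallyEq.differentiableAt_iff hzeq]
    exact hzder.differentiableAt
  have htrace : LinearMap.trace ℝ (EuclideanSpace ℝ (Fin N))
      ↑(fderiv ℝ (fun y : E => zetaTV φ y t) x) = (N : ℝ) / s := by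
    rw [hzeq.fderiv_eq, hzder.fderiv]
    have hcoe : (↑(s⁻¹ • (ContinuousLinearMap.id ℝ E)) : E →ₗ[ℝ] E)
        = s⁻¹ • (LinearMap.id : E →ₗ[ℝ] E) := by
      ext v
      simp
    rw [hcoe, _root_.map_smul, trace_id']
    rw [smul_eq_mul, div_eq_inv_mul]
  -- gradient is zero
  have hgeq : (fun y : E => fTV φ y t) =ᶠ[nhds x] fun _ => H t := by
    filter_upwards [hVmem] with y hy
    rw [fTV, ← hc, ← hsdef, if_pos (le_of_lt hy), hH]
    simp only []
    rw [div_eq_mul_inv]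
  have hgrad : gradient (fun y : E => fTV φ y t) x = 0 := by
    have h0 : HasGradientAt (fun y : E => fTV φ y t) 0 x := by
      rw [hasGradientAt_iff_hasFDerivAt]
      have : HasFDerivAt (fun _ : E => H t) (0 : E →L[ℝ] ℝ) x := hasFDerivAt_const _ _
      rw [map_zero]
      exact this.congr_of_eventuallyEq hgeq
    exact h0.gradient
  refine ⟨hdiff1, hdiff2, by rw [hfder, htrace], ?_⟩
  rw [hgrad]
  intro q
  have hz : zetaTV φ x t = s⁻¹ • x := by
    rw [zetaTV, ← hc, ← hsdef, if_pos (le_of_lt hlt)]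
  rw [hz, phi_zero hφ, sub_zero, real_inner_smul_left, zero_add]
  have key : ⟪x, q⟫ ≤ s * φ q :=
    le_trans (inner_le_polar_mul_phi hφ hN x q)
      (mul_le_mul_of_nonneg_right hlt.le (phi_nonneg hφ q))
  calc s⁻¹ * ⟪x, q⟫ ≤ s⁻¹ * (s * φ q) :=
        mul_le_mul_of_nonneg_left key (by positivity)
    _ = φ q := by field_simp

end AnisoAux2

namespace AnisoAux2

open AnisoAux

variable {N : ℕ} {φ : EuclideanSpace ℝ (Fin N) → ℝ}

local notation "E" => EuclideanSpace ℝ (Fin N)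

lemma outer_case (hφ : IsAnisoNorm φ) (hN : 0 < N) {x : E} {t : ℝ} (ht : 0 < t)
    (hgt : Real.sqrt (((N : ℝ) + 1) * t) < polar φ x)
    (hd : DifferentiableAt ℝ (polar φ) x) : Claims φ (x, t) := by
  set c : ℝ := (N : ℝ) + 1 with hc
  have hc0 : 0 < c := by positivity
  set a : ℝ := polar φ x with ha
  have ha0 : 0 < a := lt_of_le_of_lt (Real.sqrt_nonneg _) hgt
  set L : E →L[ℝ] ℝ := fderiv ℝ (polar φ) x with hLdef
  have hL : HasFDerivAt (polar φ) L x := hd.hasFDerivAt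
  have hEuler : L x = a := polar_grad_euler hφ hN hL
  have hLle : ∀ h : E, L h ≤ polar φ h := fun h => polar_grad_le hφ hN hL h
  -- open region
  have hUopen : IsOpen {q : E × ℝ | Real.sqrt (c * q.2) < polar φ q.1} :=
    isOpen_lt (Real.continuous_sqrt.comp (continuous_const.mul continuous_snd))
      ((polar_continuous hφ hN).comp continuous_fst)
  have hUmem : {q : E × ℝ | Real.sqrt (c * q.2) < polar φ q.1} ∈ nhds (x, t) :=
    hUopen.mem_nhds hgt
  have heq : (fun q : E × ℝ => fTV φ q.1 q.2) =ᶠ[nhds (x, t)]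
      fun q => polar φ q.1 + q.2 * ((N : ℝ) - 1) * (polar φ q.1)⁻¹ := by
    filter_upwards [hUmem] with q hq
    rw [fTV, ← hc, if_neg (not_le.mpr hq), div_eq_mul_inv]
  -- joint derivative
  have g1 : HasFDerivAt (fun q : E × ℝ => polar φ q.1)
      (L.comp (ContinuousLinearMap.fst ℝ E ℝ)) (x, t) :=
    by have := hL.comp (x, t) (hasFDerivAt_fst (𝕜 := ℝ) (p := (x, t))); exact this
  have g2 : HasFDerivAt (fun q : E × ℝ => q.2 * ((N : ℝ) - 1))
      (((N : ℝ) - 1) • ContinuousLinearMap.snd ℝ E ℝ) (x, t) := by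
    have g2base : HasFDerivAt (fun q : E × ℝ => q.2) (ContinuousLinearMap.snd ℝ E ℝ) (x, t) :=
      hasFDerivAt_snd
    simpa using g2base.mul_const ((N : ℝ) - 1)
  have g3 : HasFDerivAt (fun q : E × ℝ => (polar φ q.1)⁻¹)
      (-(a ^ 2)⁻¹ • (L.comp (ContinuousLinearMap.fst ℝ E ℝ))) (x, t) := by
    have := (hasDerivAt_inv ha0.ne').comp_hasFDerivAt (x, t) g1
    simp [ha, Function.comp, ← neg_smul] at this; exact this
  have g4 := g2.mul g3
  have g5 := g1.add g4
  have hdiff1 : DifferentiableAt ℝ (fun q : E × ℝ => fTV φ q.1 q.2) (x, t) := by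
    rw [Filter.EventuallyEq.differentiableAt_iff heq]
    exact g5.differentiableAt
  have hfder : fderiv ℝ (fun q : E × ℝ => fTV φ q.1 q.2) (x, t) (0, 1) = ((N : ℝ) - 1) / a := by
    have g5' : HasFDerivAt (fun q : E × ℝ => polar φ q.1 + q.2 * ((N : ℝ) - 1) * (polar φ q.1)⁻¹) _ (x, t) := g5
    rw [heq.fderiv_eq, g5'.fderiv]
    simp only [ContinuousLinearMap.add_apply, ContinuousLinearMap.comp_apply,
      ContinuousLinearMap.coe_fst', ContinuousLinearMap.coe_snd',
      ContinuousLinearMap.smul_apply, ContinuousLinearMap.coe_smul',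
      Pi.smul_apply, smul_eq_mul]
    simp [map_zero]
    field_simp
    rw [← ha, mul_div_assoc, div_self ha0.ne', mul_one]
  -- zeta part
  have hVopen : IsOpen {y : E | Real.sqrt (c * t) < polar φ y} :=
    isOpen_lt continuous_const (polar_continuous hφ hN)
  have hVmem : {y : E | Real.sqrt (c * t) < polar φ y} ∈ nhds x := hVopen.mem_nhds hgt
  have hzeq : (fun y : E => zetaTV φ y t) =ᶠ[nhds x] fun y => (polar φ y)⁻¹ • y := by
    filter_upwards [hVmem] with y hy
    rw [zetaTV, ← hc, if_neg (not_le.mpr hy)]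
  have hinv : HasFDerivAt (fun y : E => (polar φ y)⁻¹) (-(a ^ 2)⁻¹ • L) x := by
    have := (hasDerivAt_inv ha0.ne').comp_hasFDerivAt x hL
    simp [ha, Function.comp, ← neg_smul] at this; exact this
  have hzder : HasFDerivAt (fun y : E => (polar φ y)⁻¹ • y)
      (a⁻¹ • ContinuousLinearMap.id ℝ E + (-(a ^ 2)⁻¹ • L).smulRight x) x := by
    have := hinv.smul (hasFDerivAt_id x)
    simp [ha] at this; exact this
  have hdiff2 : DifferentiableAt ℝ (fun y : E => zetaTV φ y t) x := by
    rw [Filter.EventuallyEq.differentiableAt_iff hzeq]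
    exact hzder.differentiableAt
  have htrace : LinearMap.trace ℝ (EuclideanSpace ℝ (Fin N))
      ↑(fderiv ℝ (fun y : E => zetaTV φ y t) x) = ((N : ℝ) - 1) / a := by
    rw [hzeq.fderiv_eq, hzder.fderiv]
    have hsplit : (↑(a⁻¹ • ContinuousLinearMap.id ℝ E + (-(a ^ 2)⁻¹ • L).smulRight x)
        : E →ₗ[ℝ] E)
        = a⁻¹ • (LinearMap.id : E →ₗ[ℝ] E) + ↑((-(a ^ 2)⁻¹ • L).smulRight x) := by
      ext v
      simp
    rw [hsplit, map_add, _root_.map_smul, trace_id', trace_smulRight']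
    have hLx : ((-(a ^ 2)⁻¹ • L) : E →L[ℝ] ℝ) x = -(a ^ 2)⁻¹ * a := by
      rw [ContinuousLinearMap.smul_apply, hEuler, smul_eq_mul]
    rw [hLx]
    have := ha0.ne'
    field_simp
    ring
    rw [mul_comm a, mul_assoc, mul_inv_cancel₀ this, mul_one]
  -- gradient
  have hgeq : (fun y : E => fTV φ y t) =ᶠ[nhds x]
      fun y => polar φ y + t * ((N : ℝ) - 1) * (polar φ y)⁻¹ := by
    filter_upwards [hVmem] with y hy
    rw [fTV, ← hc, if_neg (not_le.mpr hy), div_eq_mul_inv]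
  set κ : ℝ := 1 - t * ((N : ℝ) - 1) * (a ^ 2)⁻¹ with hκ
  have hκpos : 0 < κ := by
    have h1 : Real.sqrt (c * t) < a := hgt
    have hsq : c * t < a ^ 2 := by
      have h5 : Real.sqrt (c * t) * Real.sqrt (c * t) < a * a :=
        mul_self_lt_mul_self (Real.sqrt_nonneg _) h1
      calc c * t = Real.sqrt (c * t) * Real.sqrt (c * t) :=
            (Real.mul_self_sqrt (mul_nonneg hc0.le ht.le)).symm
        _ < a * a := h5
        _ = a ^ 2 := (sq a).symm
    have h3 : t * ((N : ℝ) - 1) < a ^ 2 := by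
      have hct : t * ((N : ℝ) - 1) = c * t - 2 * t := by rw [hc]; ring
      rw [hct]
      linarith
    have h4 : t * ((N : ℝ) - 1) * (a ^ 2)⁻¹ < 1 := by
      have := (div_lt_one (by positivity : (0:ℝ) < a ^ 2)).mpr h3
      rw [div_eq_mul_inv] at this
      exact this
    rw [hκ]
    linarith
  have hgder : HasFDerivAt (fun y : E => polar φ y + t * ((N : ℝ) - 1) * (polar φ y)⁻¹)
      (κ • L) x := by
    have h8 : HasFDerivAt (fun y : E => t * ((N : ℝ) - 1) * (polar φ y)⁻¹)
        ((t * ((N : ℝ) - 1)) • (-(a ^ 2)⁻¹ • L)) x := hinv.const_mul (t * ((N : ℝ) - 1))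
    have h9 := hL.add h8
    have hΨ : L + (t * ((N : ℝ) - 1)) • (-(a ^ 2)⁻¹ • L) = κ • L := by
      ext v
      simp only [ContinuousLinearMap.add_apply, ContinuousLinearMap.smul_apply, smul_eq_mul, hκ]
      ring
    rw [← hΨ]
    exact h9
  set w : E := (InnerProductSpace.toDual ℝ (EuclideanSpace ℝ (Fin N))).symm L with hw
  have hwinner : ∀ v : E, ⟪w, v⟫ = L v := fun v => InnerProductSpace.toDual_symm_apply
  have hgrad : gradient (fun y : E => fTV φ y t) x = κ • w := by
    have h0 : HasGradientAt (fun y : E => fTV φ y t) (κ • w) x := by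
      rw [hasGradientAt_iff_hasFDerivAt]
      have htd : (InnerProductSpace.toDual ℝ (EuclideanSpace ℝ (Fin N))) (κ • w) = κ • L := by
        rw [_root_.map_smul, hw, LinearIsometryEquiv.apply_symm_apply]
      rw [htd]
      exact hgder.congr_of_eventuallyEq hgeq
    exact h0.gradient
  -- conclusion
  refine ⟨hdiff1, hdiff2, by rw [hfder, htrace], ?_⟩
  rw [hgrad]
  intro q
  have hz : zetaTV φ x t = a⁻¹ • x := by
    rw [zetaTV, ← hc, if_neg (not_le.mpr hgt)]
  rw [hz]
  have hphiw : φ w ≤ 1 := by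
    apply bipolar hφ hN
    intro h
    rw [hwinner h]
    exact hLle h
  have hphiκw : φ (κ • w) = κ * φ w := hφ.homog κ w hκpos.le
  have hinner : ⟪a⁻¹ • x, q - κ • w⟫ = a⁻¹ * ⟪x, q⟫ - κ := by
    rw [inner_sub_right, real_inner_smul_left, real_inner_smul_left]
    have : ⟪x, κ • w⟫ = κ * a := by
      rw [real_inner_smul_right, real_inner_comm, hwinner x, hEuler]
    rw [this]
    field_simp
  rw [hphiκw, hinner]
  have hxq : ⟪x, q⟫ ≤ a * φ q := inner_le_polar_mul_phi hφ hN x q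
  have h1 : a⁻¹ * ⟪x, q⟫ ≤ φ q := by
    calc a⁻¹ * ⟪x, q⟫ ≤ a⁻¹ * (a * φ q) :=
          mul_le_mul_of_nonneg_left hxq (by positivity)
      _ = φ q := by field_simp
  have h2 : κ * φ w ≤ κ := by
    calc κ * φ w ≤ κ * 1 := mul_le_mul_of_nonneg_left hphiw hκpos.le
      _ = κ := mul_one κ
  clear_value κ a
  linarith

end AnisoAux2

namespace AnisoAux2

open AnisoAux

variable {N : ℕ} {φ : EuclideanSpace ℝ (Fin N) → ℝ}

local notation "E" => EuclideanSpace ℝ (Fin N)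

lemma ae_claims (hφ : IsAnisoNorm φ) (hN : 0 < N) :
    ∀ᵐ p ∂(volume.restrict ((Set.univ : Set (EuclideanSpace ℝ (Fin N))) ×ˢ Set.Ioi (0 : ℝ))),
      Claims φ p := by
  set c : ℝ := (N : ℝ) + 1 with hc
  have hc0 : 0 < c := by positivity
  set G : Set (E × ℝ) := {p : E × ℝ | p.2 = (polar φ p.1) ^ 2 / c} with hG
  have hgm : Measurable fun x : E => (polar φ x) ^ 2 / c :=
    (((polar_continuous hφ hN).pow 2).div_const c).measurable
  have hmeasG : MeasurableSet G :=
    measurableSet_eq_fun measurable_snd (hgm.comp measurable_fst)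
  have hG0 : volume G = 0 := by
    rw [MeasureTheory.Measure.volume_eq_prod, MeasureTheory.Measure.prod_apply hmeasG]
    have hslice : ∀ x : E, (Prod.mk x ⁻¹' G) = {(polar φ x) ^ 2 / c} := by
      intro x
      ext τ
      simp [hG]
    rw [lintegral_congr fun x => by rw [hslice x, Real.volume_singleton]]
    simp
  have hrad : ∀ᵐ x : E ∂volume, DifferentiableAt ℝ (polar φ) x := by
    obtain ⟨K, hK⟩ := polar_lipschitz hφ hN
    exact hK.ae_differentiableAt
  have hA : volume {x : E | ¬ DifferentiableAt ℝ (polar φ) x} = 0 := ae_iff.mp hrad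
  have hrad2 : ∀ᵐ p : E × ℝ ∂volume, DifferentiableAt ℝ (polar φ) p.1 := by
    rw [ae_iff]
    have hset : {p : E × ℝ | ¬ DifferentiableAt ℝ (polar φ) p.1}
        = {x : E | ¬ DifferentiableAt ℝ (polar φ) x} ×ˢ (Set.univ : Set ℝ) := by
      ext ⟨x, t⟩
      simp
    rw [hset, MeasureTheory.Measure.volume_eq_prod, MeasureTheory.Measure.prod_prod, hA, zero_mul]
  have hae := (measure_eq_zero_iff_ae_notMem.mp hG0).and hrad2
  have hres := ae_restrict_of_ae
    (s := (Set.univ : Set (EuclideanSpace ℝ (Fin N))) ×ˢ Set.Ioi (0 : ℝ)) hae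
  have hmem : ∀ᵐ p ∂(volume.restrict
      ((Set.univ : Set (EuclideanSpace ℝ (Fin N))) ×ˢ Set.Ioi (0 : ℝ))),
      p ∈ (Set.univ : Set (EuclideanSpace ℝ (Fin N))) ×ˢ Set.Ioi (0 : ℝ) :=
    ae_restrict_mem (MeasurableSet.univ.prod measurableSet_Ioi)
  filter_upwards [hres, hmem] with p hp hpS
  obtain ⟨hpG, hpD⟩ := hp
  have ht : 0 < p.2 := hpS.2
  obtain ⟨x, t⟩ := p
  simp only [] at ht hpD hpG ⊢
  rcases lt_trichotomy (polar φ x) (Real.sqrt (c * t)) with h | h | h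
  · exact inner_case hφ hN ht (by rwa [← hc])
  · exfalso
    apply hpG
    have h2 : c * t = (polar φ x) ^ 2 := by
      have := Real.sq_sqrt (mul_nonneg hc0.le ht.le)
      rw [← h] at this
      linarith [this]
    show t = (polar φ x) ^ 2 / c
    rw [← h2]
    field_simp
  · exact outer_case hφ hN ht (by rwa [← hc]) hpD

end AnisoAux2


theorem statement2 {N : ℕ} (hN : 0 < N) (φ : EuclideanSpace ℝ (Fin N) → ℝ)
    (hφ : IsAnisoNorm φ) :
    (∀ x : EuclideanSpace ℝ (Fin N),
      Filter.Tendsto (fun t => fTV φ x t) (nhdsWithin 0 (Set.Ioi 0)) (nhds (polar φ x))) ∧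
    (∀ᵐ p ∂(volume.restrict ((Set.univ : Set (EuclideanSpace ℝ (Fin N))) ×ˢ Set.Ioi (0 : ℝ))),
      DifferentiableAt ℝ (fun q : EuclideanSpace ℝ (Fin N) × ℝ => fTV φ q.1 q.2) p ∧
      DifferentiableAt ℝ (fun y => zetaTV φ y p.2) p.1 ∧
      fderiv ℝ (fun q : EuclideanSpace ℝ (Fin N) × ℝ => fTV φ q.1 q.2) p (0, 1) =
        LinearMap.trace ℝ (EuclideanSpace ℝ (Fin N))
          ↑(fderiv ℝ (fun y => zetaTV φ y p.2) p.1) ∧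
      zetaTV φ p.1 p.2 ∈ subdiff φ (gradient (fun y => fTV φ y p.2) p.1)) := by
  exact ⟨fun x => AnisoAux.tendsto_fTV hφ hN x, AnisoAux2.ae_claims hφ hN⟩
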